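/- (Γ-liminf inequality) Let ε_p > 0 be any family of parameters. If γ_p ∈ Π(μ,ν) converges weakly-star to γ ∈ Π(μ,ν) as p → ∞, then liminf_{p→∞} J_{p,ε_p}(γ_p) ≥ J_∞(γ), i.e. the liminf of (∫ c^p dγ_p + ε_p H(γ_p|μ⊗ν))^{1/p} is at least the γ-essential supremum of c. -/

import Mathlib

open MeasureTheory ENNReal Filter
open scoped Classical

noncomputable section

/-- ℝ^d with its Euclidean structure. -/
abbrev Rd (d : ℕ) := EuclideanSpace ℝ (Fin d)

/-- γ ∈ Π(μ,ν): γ has first marginal μ and second marginal ν. -/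
def IsCoupling {E F : Type*} [MeasurableSpace E] [MeasurableSpace F]
    (γ : Measure (E × F)) (μ : Measure E) (ν : Measure F) : Prop :=
  γ.map Prod.fst = μ ∧ γ.map Prod.snd = ν

/-- Relative entropy H(γ|ρ) = ∫ log(dγ/dρ) dγ if γ ≪ ρ (and the integral exists), +∞ otherwise. -/
def relEntropy {E : Type*} [MeasurableSpace E] (γ ρ : Measure E) : ℝ≥0∞ :=
  if γ ≪ ρ ∧ Integrable (llr γ ρ) γ then ENNReal.ofReal (∫ z, llr γ ρ z ∂γ) else ∞

/-- The entropic functional J_{p,ε}(γ) = (∫ c^p dγ + ε H(γ|μ⊗ν))^{1/p} on Π(μ,ν), +∞ outside. -/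
def Jpe {d : ℕ} (c : Rd d × Rd d → ℝ) (μ ν : Measure (Rd d)) (p ε : ℝ)
    (γ : Measure (Rd d × Rd d)) : ℝ≥0∞ :=
  if IsCoupling γ μ ν then
    (∫⁻ z, ENNReal.ofReal (c z ^ p) ∂γ + ENNReal.ofReal ε * relEntropy γ (μ.prod ν)) ^ (1 / p)
  else ∞

/-- The supremal functional J_∞(γ) = γ-ess sup c on Π(μ,ν), +∞ outside. -/
def Jinf {d : ℕ} (c : Rd d × Rd d → ℝ) (μ ν : Measure (Rd d))
    (γ : Measure (Rd d × Rd d)) : ℝ≥0∞ :=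
  if IsCoupling γ μ ν then essSup (fun z => ENNReal.ofReal (c z)) γ else ∞

/-- Weak-star convergence of a family of (probability) measures, as the real parameter p → ∞. -/
def WeakStarTendsto {E : Type*} [MeasurableSpace E] [TopologicalSpace E]
    (γ : ℝ → Measure E) (γ₀ : Measure E) : Prop :=
  ∀ f : BoundedContinuousFunction E ℝ,
    Tendsto (fun p => ∫ z, f z ∂(γ p)) atTop (nhds (∫ z, f z ∂γ₀))

/-- The support of a Borel measure: points all of whose neighborhoods have positive measure. -/
def msupport {E : Type*} [MeasurableSpace E] [TopologicalSpace E] (μ : Measure E) : Set E :=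
  {x | ∀ U ∈ nhds x, μ U ≠ 0}

/-- (Γ-liminf inequality) If γ_p ∈ Π(μ,ν) converges weakly-star to γ ∈ Π(μ,ν), then
    liminf_{p→∞} J_{p,ε_p}(γ_p) ≥ J_∞(γ), for any parameters ε_p > 0. -/
theorem gamma_liminf {d : ℕ} (c : Rd d × Rd d → ℝ) (hc : Continuous c) (hc0 : ∀ z, 0 ≤ c z)
    (μ ν : Measure (Rd d)) [IsProbabilityMeasure μ] [IsProbabilityMeasure ν]
    (hμ : IsCompact (msupport μ)) (hν : IsCompact (msupport ν))
    (ε : ℝ → ℝ) (hε : ∀ p, 0 < ε p)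
    (γseq : ℝ → Measure (Rd d × Rd d)) (hγseqP : ∀ p, IsProbabilityMeasure (γseq p))
    (hγseqC : ∀ p, IsCoupling (γseq p) μ ν)
    (γ : Measure (Rd d × Rd d)) (hγP : IsProbabilityMeasure γ) (hγC : IsCoupling γ μ ν)
    (hconv : WeakStarTendsto γseq γ) :
    Jinf c μ ν γ ≤ Filter.liminf (fun p => Jpe c μ ν p (ε p) (γseq p)) atTop := by
  rw [Jinf, if_pos hγC]
  set f : Rd d × Rd d → ℝ≥0∞ := fun z => ENNReal.ofReal (c z) with hf
  -- weak convergence as ProbabilityMeasure convergence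
  let P : ℝ → ProbabilityMeasure (Rd d × Rd d) := fun p => ⟨γseq p, hγseqP p⟩
  let P0 : ProbabilityMeasure (Rd d × Rd d) := ⟨γ, hγP⟩
  have hP : Tendsto P atTop (nhds P0) :=
    ProbabilityMeasure.tendsto_iff_forall_integral_tendsto.mpr hconv
  refine le_of_forall_lt_imp_le_of_dense fun r hr => ?_
  obtain ⟨a, hra, haS⟩ := exists_between hr
  have ha_top : a ≠ ∞ := (haS.trans_le le_top).ne
  set t := a.toReal with htdef
  have ht0 : 0 ≤ t := ENNReal.toReal_nonneg
  have hat : ENNReal.ofReal t = a := ENNReal.ofReal_toReal ha_top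
  set U : Set (Rd d × Rd d) := {z | t < c z} with hU
  have hUopen : IsOpen U := isOpen_lt continuous_const hc
  have hsub : {z | a < f z} ⊆ U := by
    intro z hz
    by_contra h
    simp only [hU, Set.mem_setOf_eq, not_lt] at h
    exact absurd (le_trans (ENNReal.ofReal_le_ofReal h) hat.le) (not_le.mpr hz)
  have hγU : 0 < γ U := by
    by_contra h
    push_neg at h
    have hU0 : γ U = 0 := le_antisymm h zero_le
    have h0 : γ {z | a < f z} = 0 := measure_mono_null hsub hU0
    have hae : ∀ᵐ z ∂γ, f z ≤ a := by
      rw [ae_iff]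
      simpa only [not_le] using h0
    exact absurd (essSup_le_of_ae_le a hae) (not_le.mpr haS)
  have hliminfU : γ U ≤ atTop.liminf (fun p => γseq p U) :=
    ProbabilityMeasure.le_liminf_measure_open_of_tendsto hP hUopen
  obtain ⟨b, hb0, hbU⟩ := exists_between hγU
  have hb_top : b ≠ ∞ := (hbU.trans_le (measure_lt_top γ U).le).ne
  have hev : ∀ᶠ p in atTop, b < γseq p U :=
    eventually_lt_of_lt_liminf (lt_of_lt_of_le hbU hliminfU)
  -- eventual lower bound on Jpe
  have hkey : ∀ᶠ p in atTop, ENNReal.ofReal t * b ^ (1 / p)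
      ≤ Jpe c μ ν p (ε p) (γseq p) := by
    filter_upwards [hev, eventually_ge_atTop (1 : ℝ)] with p hbp hp1
    have hp0 : 0 < p := lt_of_lt_of_le one_pos hp1
    rw [Jpe, if_pos (hγseqC p)]
    have hineq : ENNReal.ofReal (t ^ p) * γseq p U
        ≤ ∫⁻ z, ENNReal.ofReal (c z ^ p) ∂(γseq p) := by
      calc ENNReal.ofReal (t ^ p) * γseq p U
          = ∫⁻ _ in U, ENNReal.ofReal (t ^ p) ∂(γseq p) := by
            rw [setLIntegral_const, mul_comm]
        _ ≤ ∫⁻ z in U, ENNReal.ofReal (c z ^ p) ∂(γseq p) := by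
            refine setLIntegral_mono (by fun_prop) fun z hz => ?_
            exact ENNReal.ofReal_le_ofReal
              (Real.rpow_le_rpow ht0 (le_of_lt hz) hp0.le)
        _ ≤ ∫⁻ z, ENNReal.ofReal (c z ^ p) ∂(γseq p) :=
            setLIntegral_le_lintegral _ _
    have hmono : ENNReal.ofReal (t ^ p) * γseq p U
        ≤ ∫⁻ z, ENNReal.ofReal (c z ^ p) ∂(γseq p)
          + ENNReal.ofReal (ε p) * relEntropy (γseq p) (μ.prod ν) :=
      le_trans hineq le_self_add
    have h1p : (0:ℝ) ≤ 1 / p := by positivity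
    calc ENNReal.ofReal t * b ^ (1 / p)
        ≤ ENNReal.ofReal t * (γseq p U) ^ (1 / p) := by
          gcongr
      _ = (ENNReal.ofReal (t ^ p) * γseq p U) ^ (1 / p) := by
          rw [ENNReal.mul_rpow_of_nonneg _ _ h1p,
            ← ENNReal.ofReal_rpow_of_nonneg ht0 hp0.le,
            ← ENNReal.rpow_mul, mul_one_div_cancel hp0.ne', ENNReal.rpow_one]
      _ ≤ _ := ENNReal.rpow_le_rpow hmono h1p
  -- the lower bound tends to ofReal t
  have hb0' : 0 < b.toReal := ENNReal.toReal_pos hb0.ne' hb_top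
  have htend : Tendsto (fun p : ℝ => ENNReal.ofReal t * b ^ (1 / p)) atTop
      (nhds (ENNReal.ofReal t)) := by
    have h1 : Tendsto (fun p : ℝ => 1 / p) atTop (nhds 0) := by
      simpa using tendsto_inv_atTop_zero
    have h2 : Tendsto (fun q : ℝ => b ^ q) (nhds 0) (nhds 1) := by
      have : ContinuousAt (fun q : ℝ => b.toReal ^ q) 0 :=
        Real.continuousAt_const_rpow hb0'.ne'
      have h3 : Tendsto (fun q : ℝ => ENNReal.ofReal (b.toReal ^ q)) (nhds 0)
          (nhds (ENNReal.ofReal (b.toReal ^ (0:ℝ)))) :=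
        (ENNReal.continuous_ofReal.continuousAt.comp this)
      simp only [Real.rpow_zero, ENNReal.ofReal_one] at h3
      refine h3.congr fun q => ?_
      rw [← ENNReal.ofReal_rpow_of_pos hb0', ENNReal.ofReal_toReal hb_top]
    have := ENNReal.Tendsto.const_mul (h2.comp h1) (a := ENNReal.ofReal t)
      (Or.inr ENNReal.ofReal_ne_top)
    simpa using this
  calc r ≤ ENNReal.ofReal t := (hat ▸ hra).le
    _ = atTop.liminf (fun p : ℝ => ENNReal.ofReal t * b ^ (1 / p)) :=
        (htend.liminf_eq).symm
    _ ≤ _ := liminf_le_liminf hkey
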